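/- If (F_2^n, *) is a group with identity 0 and * is such that d(v, v*u) = wt(u) for all u, v ∈ F_2^n, then * satisfies the three distance-compatibility conditions: d(v, v*e) = 1 for all weight-one e; v*0 = v; and v*e = w*e implies v = w for weight-one e. Conversely, if (F_2^n, *) is a group and * is distance-compatible, then d(v, v*u) = wt(u) for all u, v. -/

import Mathlib

namespace DCaux

open Finset



variable {n : ℕ}

lemma single_norm (i : Fin n) : hammingNorm (Pi.single i 1 : Fin n → ZMod 2) = 1 := by
  unfold hammingNorm
  rw [Finset.card_eq_one]
  refine ⟨i, ?_⟩
  ext j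
  simp only [Finset.mem_filter, Finset.mem_univ, true_and, Finset.mem_singleton]
  constructor
  · intro h
    by_contra hji
    exact h (Pi.single_eq_of_ne hji 1)
  · rintro rfl
    simp

lemma dist_add_single (u : Fin n → ZMod 2) (i : Fin n) :
    hammingDist u (u + Pi.single i 1) = 1 := by
  rw [hammingDist_eq_hammingNorm]
  have : u - (u + Pi.single i 1) = (Pi.single i 1 : Fin n → ZMod 2) := by
    have : (2 : ZMod 2) = 0 := by decide
    funext j; by_cases hji : j = i
    · subst hji; simp [Pi.single_eq_same]
    · simp [Pi.single_eq_of_ne hji]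
  rw [neg_add_cancel_left, single_norm]

lemma zmod2_ne {a b : ZMod 2} (h : a ≠ b) : b = a + 1 := by
  revert h; revert a b; decide

lemma dist_one (u w : Fin n → ZMod 2) (h : hammingDist u w = 1) :
    ∃ i, w = u + Pi.single i 1 := by
  rw [hammingDist, Finset.card_eq_one] at h
  obtain ⟨i, hi⟩ := h
  refine ⟨i, ?_⟩
  have hmem : ∀ k, (u k ≠ w k) ↔ k = i := by
    intro k
    have := Finset.ext_iff.mp hi k
    simpa using this
  funext j
  by_cases hji : j = i
  · subst hji
    have := zmod2_ne ((hmem j).2 rfl)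
    simp [this, Pi.single_eq_same]
  · have : ¬ (u j ≠ w j) := fun hc => hji ((hmem j).1 hc)
    push_neg at this
    simp [Pi.single_eq_of_ne hji, ← this]

lemma norm_le (a b : Fin n → ZMod 2) : hammingNorm a ≤ hammingNorm b + hammingDist b a := by
  have := hammingDist_triangle 0 b a
  simpa [hammingDist_zero_left] using this

lemma wt_succ {u : Fin n → ZMod 2} {k : ℕ} (h : hammingNorm u = k + 1) :
    ∃ i, hammingNorm (u + Pi.single i 1) = k := by
  have hne : u ≠ 0 := by
    intro h0; rw [h0] at h; simp at h
  obtain ⟨i, hi⟩ : ∃ i, u i ≠ 0 := by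
    by_contra hc; push_neg at hc; exact hne (funext hc)
  refine ⟨i, ?_⟩
  have hui : u i = 1 := by
    have := zmod2_ne (Ne.symm hi); simpa using this
  set v : Fin n → ZMod 2 := u + Pi.single i 1 with hv
  have hset : Finset.univ.filter (fun j => v j ≠ 0)
      = (Finset.univ.filter (fun j => u j ≠ 0)).erase i := by
    ext j
    simp only [Finset.mem_filter, Finset.mem_univ, true_and, Finset.mem_erase]
    by_cases hji : j = i
    · subst hji
      simp [hv, hui, Pi.single_eq_same]
      decide
    · simp [hv, Pi.single_eq_of_ne hji, hji]
  have h2 : hammingNorm v = ((Finset.univ.filter (fun j => u j ≠ 0)).erase i).card := by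
    rw [← hset]; rfl
  rw [h2, Finset.card_erase_of_mem (by simpa using hi)]
  have h3 : (Finset.univ.filter (fun j => u j ≠ 0)).card = k + 1 := h
  omega

lemma dist_succ {v w : Fin n → ZMod 2} {k : ℕ} (h : hammingDist v w = k + 1) :
    ∃ i, hammingDist v (w + Pi.single i 1) = k := by
  have h' : hammingNorm (w - v) = k + 1 := by
    rw [← neg_add_eq_sub, ← hammingDist_eq_hammingNorm]; exact h
  obtain ⟨i, hi⟩ := wt_succ h'
  refine ⟨i, ?_⟩
  rw [hammingDist_eq_hammingNorm, neg_add_eq_sub]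
  have : w + Pi.single i 1 - v = (w - v) + Pi.single i 1 := by ring
  rw [this]; exact hi



variable {n : ℕ} (mul : (Fin n → ZMod 2) → (Fin n → ZMod 2) → (Fin n → ZMod 2))
variable (hassoc : ∀ a b c, mul (mul a b) c = mul a (mul b c))
variable (hid : ∀ v, mul v 0 = v ∧ mul 0 v = v)
variable (hinv : ∀ v, ∃ w, mul v w = 0 ∧ mul w v = 0)

include hassoc hid hinv in
lemma left_cancel {v a b : Fin n → ZMod 2} (h : mul v a = mul v b) : a = b := by
  obtain ⟨w, h1, h2⟩ := hinv v
  have := congrArg (fun x => mul w x) h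
  simpa [← hassoc, h2, (hid _).2] using this

include hassoc hid hinv in
lemma right_cancel {v a b : Fin n → ZMod 2} (h : mul a v = mul b v) : a = b := by
  obtain ⟨w, h1, h2⟩ := hinv v
  have := congrArg (fun x => mul x w) h
  simpa [hassoc, h1, (hid _).1] using this

include hassoc hid hinv in
lemma neighbor_surj
    (h1 : ∀ v e : Fin n → ZMod 2, hammingNorm e = 1 → hammingDist v (mul v e) = 1)
    (u w : Fin n → ZMod 2) (h : hammingDist u w = 1) :
    ∃ e, hammingNorm e = 1 ∧ mul u e = w := by
  classical
  set S : Finset (Fin n → ZMod 2) :=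
    Finset.univ.image (fun i : Fin n => mul u (Pi.single i 1)) with hS
  set T : Finset (Fin n → ZMod 2) :=
    Finset.univ.image (fun i : Fin n => u + Pi.single i 1) with hT
  have hST : S ⊆ T := by
    intro x hx
    rw [hS, Finset.mem_image] at hx
    obtain ⟨i, _, rfl⟩ := hx
    have hd := h1 u (Pi.single i 1) (single_norm i)
    obtain ⟨j, hj⟩ := dist_one u _ hd
    rw [hT, Finset.mem_image]
    exact ⟨j, Finset.mem_univ j, hj.symm⟩
  have hsingle_inj : Function.Injective (fun i : Fin n => (Pi.single i 1 : Fin n → ZMod 2)) := by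
    intro i j hij
    by_contra hne
    have := congrFun hij i
    simp [Pi.single_eq_same, Pi.single_eq_of_ne hne] at this
  have hcardS : S.card = n := by
    rw [hS, Finset.card_image_of_injective _ ?_, Finset.card_univ, Fintype.card_fin]
    intro i j hij
    exact hsingle_inj (left_cancel mul hassoc hid hinv hij)
  have hcardT : T.card = n := by
    rw [hT, Finset.card_image_of_injective _ ?_, Finset.card_univ, Fintype.card_fin]
    intro i j hij
    exact hsingle_inj (by simpa using hij)
  have hSeqT : S = T := Finset.eq_of_subset_of_card_le hST (by omega)
  obtain ⟨j, hj⟩ := dist_one u w h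
  have hwT : w ∈ T := by
    rw [hT, Finset.mem_image]; exact ⟨j, Finset.mem_univ j, hj.symm⟩
  rw [← hSeqT, hS, Finset.mem_image] at hwT
  obtain ⟨i, _, hi⟩ := hwT
  exact ⟨Pi.single i 1, single_norm i, hi⟩

include hassoc hid hinv in
lemma main_ind
    (h1 : ∀ v e : Fin n → ZMod 2, hammingNorm e = 1 → hammingDist v (mul v e) = 1)
    (k : ℕ) :
    (∀ v u : Fin n → ZMod 2, hammingNorm u = k → hammingDist v (mul v u) ≤ k) ∧
    (∀ v w : Fin n → ZMod 2, hammingDist v w = k → ∃ u, mul v u = w ∧ hammingNorm u ≤ k) := by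
  induction k with
  | zero =>
    constructor
    · intro v u hu
      have : u = 0 := hammingNorm_eq_zero.mp hu
      subst this
      simp [(hid v).1]
    · intro v w hw
      have : v = w := eq_of_hammingDist_eq_zero hw
      subst this
      exact ⟨0, (hid v).1, by simp⟩
  | succ k ih =>
    constructor
    · intro v u hu
      obtain ⟨i, hi⟩ := wt_succ hu
      set u₀ : Fin n → ZMod 2 := u + Pi.single i 1 with hu₀
      have hdu : hammingDist u₀ u = 1 := by
        have : u = u₀ + Pi.single i 1 := by
          rw [hu₀]; funext j
          by_cases hji : j = i
          · subst hji; simp [Pi.single_eq_same, add_assoc, (by decide : (1:ZMod 2)+1 = 0)]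
          · simp [Pi.single_eq_of_ne hji]
        rw [this]
        exact dist_add_single _ i
      obtain ⟨e, he1, he2⟩ := neighbor_surj mul hassoc hid hinv h1 u₀ u hdu
      have hstep : mul v u = mul (mul v u₀) e := by
        rw [hassoc, he2]
      calc hammingDist v (mul v u) ≤ hammingDist v (mul v u₀)
              + hammingDist (mul v u₀) (mul v u) := hammingDist_triangle _ _ _
        _ ≤ k + 1 := by
            have ha := (ih.1) v u₀ hi
            have hb : hammingDist (mul v u₀) (mul v u) = 1 := by
              rw [hstep]; exact h1 (mul v u₀) e he1
            omega
    · intro v w hw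
      obtain ⟨i, hi⟩ := dist_succ hw
      set w₀ : Fin n → ZMod 2 := w + Pi.single i 1 with hw₀
      have hdw : hammingDist w₀ w = 1 := by
        have : w = w₀ + Pi.single i 1 := by
          rw [hw₀]; funext j
          by_cases hji : j = i
          · subst hji; simp [Pi.single_eq_same, add_assoc, (by decide : (1:ZMod 2)+1 = 0)]
          · simp [Pi.single_eq_of_ne hji]
        rw [this]
        exact dist_add_single _ i
      obtain ⟨u₀, hu₀1, hu₀2⟩ := (ih.2) v w₀ hi
      obtain ⟨e, he1, he2⟩ := neighbor_surj mul hassoc hid hinv h1 w₀ w hdw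
      refine ⟨mul u₀ e, ?_, ?_⟩
      · rw [← hassoc, hu₀1, he2]
      · have := norm_le (mul u₀ e) u₀
        have hd : hammingDist u₀ (mul u₀ e) = 1 := h1 u₀ e he1
        omega


end DCaux

theorem distance_compatible_iff (n : ℕ)
    (mul : (Fin n → ZMod 2) → (Fin n → ZMod 2) → (Fin n → ZMod 2))
    (hassoc : ∀ a b c, mul (mul a b) c = mul a (mul b c))
    (hid : ∀ v, mul v 0 = v ∧ mul 0 v = v)
    (hinv : ∀ v, ∃ w, mul v w = 0 ∧ mul w v = 0) :
    ((∀ u v : Fin n → ZMod 2, hammingDist v (mul v u) = hammingNorm u) →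
      ((∀ v e : Fin n → ZMod 2, hammingNorm e = 1 → hammingDist v (mul v e) = 1) ∧
       (∀ v : Fin n → ZMod 2, mul v 0 = v ∧ mul 0 v = v) ∧
       (∀ v w e : Fin n → ZMod 2, hammingNorm e = 1 → mul v e = mul w e → v = w))) ∧
    (((∀ v e : Fin n → ZMod 2, hammingNorm e = 1 → hammingDist v (mul v e) = 1) ∧
      (∀ v : Fin n → ZMod 2, mul v 0 = v ∧ mul 0 v = v) ∧
      (∀ v w e : Fin n → ZMod 2, hammingNorm e = 1 → mul v e = mul w e → v = w)) →
      ∀ u v : Fin n → ZMod 2, hammingDist v (mul v u) = hammingNorm u) := by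
  constructor
  · intro h
    refine ⟨fun v e he => by rw [h e v, he], hid, ?_⟩
    intro v w e _ hvw
    exact DCaux.right_cancel mul hassoc hid hinv hvw
  · rintro ⟨h1, _, _⟩ u v
    have hle : hammingDist v (mul v u) ≤ hammingNorm u :=
      (DCaux.main_ind mul hassoc hid hinv h1 (hammingNorm u)).1 v u rfl
    have hge : hammingNorm u ≤ hammingDist v (mul v u) := by
      obtain ⟨u', hu'1, hu'2⟩ :=
        (DCaux.main_ind mul hassoc hid hinv h1 (hammingDist v (mul v u))).2 v (mul v u) rfl
      have heq : u' = u := DCaux.left_cancel mul hassoc hid hinv hu'1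
      rw [heq] at hu'2
      exact hu'2
    omega
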